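/- Let (ℓ_j)_{j=1}^n be independent random variables with geometric distributions with parameters p_j satisfying ε₀ < p_j < 1 − ε₀ for a fixed ε₀ > 0. Let S_n = ℓ_1 + ⋯ + ℓ_n and define δ_{0,n}(j) = P(S_n = j) and δ_{m,n} = ∇^m δ_{0,n}, where (∇a)(j) = a(j+1) − a(j). Then for every m ≥ 0 there exists a constant C_m (depending only on m and ε₀) such that sup_j |δ_{m,n}(j)| ≤ C_m n^{−(m+1)/2}. -/

import Mathlib

open MeasureTheory ProbabilityTheory

/-- The forward difference operator on sequences indexed by `ℤ`. -/
def nabla (a : ℤ → ℝ) : ℤ → ℝ := fun j => a (j + 1) - a j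

open scoped Real

namespace LLT
open Set


lemma norm_exp_nat (t : ℝ) (m : ℕ) : ‖Complex.exp (t * m * Complex.I)‖ = 1 := by
  have : (t : ℂ) * m = ((t * m : ℝ) : ℂ) := by push_cast; ring
  rw [this, Complex.norm_exp_ofReal_mul_I]

lemma norm_exp_int (t : ℝ) (m : ℤ) : ‖Complex.exp (t * m * Complex.I)‖ = 1 := by
  have : (t : ℂ) * m = ((t * m : ℝ) : ℂ) := by push_cast; ring
  rw [this, Complex.norm_exp_ofReal_mul_I]

lemma geom_char {Ω : Type*} [MeasureSpace Ω] [IsProbabilityMeasure (ℙ : Measure Ω)]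
    {X : Ω → ℕ} (hX : Measurable X) {q : ℝ} (hq0 : 0 < q) (hq1 : q < 1)
    (hval : ∀ ω, 1 ≤ X ω)
    (hgeom : ∀ m, 1 ≤ m → (ℙ {ω | X ω = m}).toReal = q * (1 - q) ^ (m - 1)) (t : ℝ) :
    ∫ ω, Complex.exp (t * X ω * Complex.I) ∂ℙ
      = q * Complex.exp (t * Complex.I) * (1 - (1 - q) * Complex.exp (t * Complex.I))⁻¹ := by
  have hmap : IsProbabilityMeasure (Measure.map X ℙ) := Measure.isProbabilityMeasure_map hX.aemeasurable
  have hint : Integrable (fun m : ℕ => Complex.exp (t * m * Complex.I)) (Measure.map X ℙ) :=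
    Integrable.mono' (integrable_const 1) measurable_from_top.aestronglyMeasurable
      (ae_of_all _ fun m => by rw [norm_exp_nat])
  have h1 : ∫ ω, Complex.exp (t * X ω * Complex.I) ∂ℙ
      = ∫ m : ℕ, Complex.exp (t * m * Complex.I) ∂(Measure.map X ℙ) :=
    (integral_map (φ := X) (f := fun m : ℕ => Complex.exp (t * m * Complex.I)) hX.aemeasurable measurable_from_top.aestronglyMeasurable).symm
  rw [h1, integral_countable' hint]
  have hpre : ∀ m : ℕ, Measure.map X ℙ {m} = ℙ {ω | X ω = m} := by
    intro m
    rw [Measure.map_apply hX (measurableSet_singleton m)]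
    rfl
  -- the summand
  set g : ℕ → ℂ := fun m => ((Measure.map X ℙ) {m}).toReal • Complex.exp (t * m * Complex.I)
    with hg
  have hq1' : |1 - q| < 1 := by rw [abs_lt]; constructor <;> linarith
  have hsum : Summable g := by
    apply Summable.of_norm_bounded (g := fun m => (q / (1 - q)) * (1 - q) ^ m)
      ((summable_geometric_of_lt_one (by linarith) (by linarith)).mul_left _)
    intro m
    rw [hg]
    simp only [norm_smul, norm_exp_nat, mul_one, Real.norm_eq_abs, ENNReal.abs_toReal]
    match m with
    | 0 =>
        have : {ω | X ω = 0} = (∅ : Set Ω) := by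
          ext ω; simpa using Nat.one_le_iff_ne_zero.mp (hval ω)
        rw [hpre, this]
        have h01 : (0:ℝ) < 1 - q := by linarith
        simp only [measure_empty, ENNReal.toReal_zero, zero_mul]
        positivity
    | m + 1 =>
        rw [hpre, hgeom (m+1) (Nat.le_add_left 1 m)]
        simp only [Nat.add_sub_cancel]
        have h01 : (0:ℝ) < 1 - q := by linarith
        apply le_of_eq
        field_simp
        ring
  show ∑' m, g m = _
  rw [Summable.tsum_eq_zero_add hsum]
  have hg0 : g 0 = 0 := by
    have : {ω | X ω = 0} = (∅ : Set Ω) := by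
      ext ω; simpa using Nat.one_le_iff_ne_zero.mp (hval ω)
    rw [hg]; simp only [hpre, this]; simp
  rw [hg0, zero_add]
  have hgs : ∀ k : ℕ, g (k + 1)
      = (q * Complex.exp (t * Complex.I)) * ((1 - q) * Complex.exp (t * Complex.I)) ^ k := by
    intro k
    rw [hg]
    simp only [hpre, hgeom (k+1) (Nat.le_add_left 1 k), Nat.add_sub_cancel]
    have he : Complex.exp (t * (k+1 : ℕ) * Complex.I) = Complex.exp (t * Complex.I) ^ (k+1) := by
      rw [← Complex.exp_nat_mul]
      congr 1
      push_cast
      ring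
    rw [he]
    push_cast
    rw [mul_pow, pow_succ]
    simp only [Complex.real_smul]
    push_cast
    ring
  have hz : ‖((1:ℂ) - q) * Complex.exp (t * Complex.I)‖ < 1 := by
    rw [norm_mul, Complex.norm_exp_ofReal_mul_I, mul_one]
    have : ((1:ℂ) - q) = ((1 - q : ℝ) : ℂ) := by push_cast; ring
    rw [this, Complex.norm_real, Real.norm_eq_abs]
    exact hq1'
  calc ∑' k, g (k + 1)
      = ∑' k, (q * Complex.exp (t * Complex.I)) * ((1 - q) * Complex.exp (t * Complex.I)) ^ k := by
        exact tsum_congr hgs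
    _ = (q * Complex.exp (t * Complex.I)) * ∑' k, ((1 - q) * Complex.exp (t * Complex.I)) ^ k :=
        tsum_mul_left
    _ = q * Complex.exp (t * Complex.I) * (1 - (1 - q) * Complex.exp (t * Complex.I))⁻¹ := by
        rw [tsum_geometric_of_norm_lt_one hz]



-- 1 - cos t ≥ 2 t^2 / π^2 for |t| ≤ π
lemma cos_upper {t : ℝ} (ht : |t| ≤ π) : 2 * t^2 / π^2 ≤ 1 - Real.cos t := by
  have hπ : (0:ℝ) < π := Real.pi_pos
  have h1 : Real.cos t = Real.cos |t| := (Real.cos_abs t).symm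
  rw [h1]
  set s := |t| with hs
  have hs0 : 0 ≤ s := abs_nonneg t
  have hsin : 2 / π * (s / 2) ≤ Real.sin (s / 2) :=
    Real.mul_le_sin (by linarith) (by linarith)
  have hsq : Real.sin (s / 2) ^ 2 = (1 - Real.cos s) / 2 := by
    rw [Real.sin_sq_eq_half_sub, show 2 * (s / 2) = s by ring]
    ring
  have ht2 : t^2 = s^2 := (sq_abs t).symm
  have h3 : (2 / π * (s / 2))^2 ≤ Real.sin (s/2)^2 := by
    apply pow_le_pow_left₀ (by positivity) hsin
  rw [hsq] at h3
  have : (2 / π * (s / 2))^2 = s^2 / π^2 := by field_simp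
  rw [this] at h3
  rw [ht2]
  have hπ2 : (0:ℝ) < π^2 := by positivity
  rw [div_le_iff₀ hπ2] at h3 ⊢
  linarith

-- exp (u/3) ≤ 1 + u for 0 ≤ u ≤ 2
lemma exp_third_le {u : ℝ} (h0 : 0 ≤ u) (h2 : u ≤ 2) : Real.exp (u / 3) ≤ 1 + u := by
  have h := Real.add_one_le_exp (-(u / 3))
  have hpos : 0 < Real.exp (u / 3) := Real.exp_pos _
  have hinv : Real.exp (-(u/3)) = (Real.exp (u/3))⁻¹ := Real.exp_neg _
  rw [hinv] at h
  have h13 : 0 < 1 - u / 3 := by linarith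
  have key : Real.exp (u/3) * (1 - u/3) ≤ 1 := by
    have := mul_le_mul_of_nonneg_left h hpos.le
    rw [mul_inv_cancel₀ hpos.ne'] at this
    linarith [this]
  nlinarith

set_option maxHeartbeats 1000000 in
lemma geom_char_norm_le {q ε₀ : ℝ} (hε : 0 < ε₀) (h1 : ε₀ < q) (h2 : q < 1 - ε₀)
    {t : ℝ} (ht : |t| ≤ π) :
    ‖(q:ℂ) * Complex.exp (t * Complex.I) * (1 - (1 - q) * Complex.exp (t * Complex.I))⁻¹‖
      ≤ Real.exp (-(2 * ε₀ / (3 * π ^ 2)) * t ^ 2) := by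
  have hπ : (0:ℝ) < π := Real.pi_pos
  have hq0 : 0 < q := lt_trans hε h1
  have hq1 : q < 1 := by linarith
  have hε2 : ε₀ < 1/2 := by linarith
  set D : ℂ := 1 - (1 - q) * Complex.exp (t * Complex.I) with hD
  set y : ℝ := 1 - Real.cos t with hy
  have hy0 : 0 ≤ y := by have := Real.cos_le_one t; simp [hy]; linarith
  have hy2 : y ≤ 2 := by have := Real.neg_one_le_cos t; simp [hy]; linarith
  have hDnorm : Complex.normSq D = q^2 + 2 * (1 - q) * y := by
    have hre : D.re = 1 - (1 - q) * Real.cos t := by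
      simp [hD, Complex.exp_ofReal_mul_I_re]
    have him : D.im = -((1 - q) * Real.sin t) := by
      simp [hD, Complex.exp_ofReal_mul_I_im]
    rw [Complex.normSq_apply, hre, him, hy]
    nlinarith [Real.sin_sq_add_cos_sq t]
  -- norm of the expression
  have hnorm : ‖(q:ℂ) * Complex.exp (t * Complex.I) * D⁻¹‖ ^ 2
      = q^2 / (q^2 + 2 * (1 - q) * y) := by
    rw [norm_mul, norm_mul, norm_inv, Complex.norm_exp_ofReal_mul_I, Complex.norm_real]
    rw [mul_pow, mul_pow, inv_pow, Real.norm_eq_abs, sq_abs, one_pow, mul_one]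
    rw [Complex.sq_norm, hDnorm, div_eq_mul_inv]
  -- key inequality at the squared level
  have hkey : q^2 / (q^2 + 2 * (1 - q) * y) ≤ (Real.exp (-(2 * ε₀ / (3 * π ^ 2)) * t ^ 2)) ^ 2 := by
    have hyt : 2 * t^2 / π^2 ≤ y := cos_upper ht
    have hu2 : 2 * ε₀ * y ≤ 2 := by nlinarith
    have hu0 : 0 ≤ 2 * ε₀ * y := by positivity
    have hexp1 : Real.exp ((2 * ε₀ * y) / 3) ≤ 1 + 2 * ε₀ * y := exp_third_le hu0 hu2
    have hqsq : q^2 < 1 := by nlinarith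
    have hq2 : q^2 * ε₀ ≤ 1 - q := by nlinarith [mul_lt_mul_of_pos_right hqsq hε]
    have hden1 : q^2 * (1 + 2 * ε₀ * y) ≤ q^2 + 2 * (1 - q) * y := by
      nlinarith [mul_le_mul_of_nonneg_right hq2 hy0]
    have hden2 : q^2 * Real.exp ((2 * ε₀ * y) / 3) ≤ q^2 + 2 * (1 - q) * y := by
      nlinarith [mul_le_mul_of_nonneg_left hexp1 (sq_nonneg q)]
    have hAe : (Real.exp (-(2 * ε₀ / (3 * π ^ 2)) * t ^ 2)) ^ 2
        = Real.exp (-(4 * ε₀ / (3 * π ^ 2)) * t ^ 2) := by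
      rw [← Real.exp_nat_mul]
      congr 1
      push_cast
      ring
    rw [hAe]
    have hmono : Real.exp (-((2 * ε₀ * y) / 3)) ≤ Real.exp (-(4 * ε₀ / (3 * π ^ 2)) * t ^ 2) := by
      apply Real.exp_le_exp.mpr
      have hyt' : 2 * t^2 ≤ y * π^2 := by
        rw [div_le_iff₀ (by positivity)] at hyt; linarith
      have : 4 * ε₀ / (3 * π ^ 2) * t ^ 2 ≤ (2 * ε₀ * y) / 3 := by
        rw [div_mul_eq_mul_div, div_le_div_iff₀ (by positivity) (by norm_num)]
        nlinarith [mul_le_mul_of_nonneg_left hyt' hε.le]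
      linarith
    have hden0 : (0:ℝ) < q^2 + 2 * (1 - q) * y := by nlinarith
    rw [div_le_iff₀ hden0]
    calc q^2 = (q^2 * Real.exp ((2 * ε₀ * y) / 3)) * Real.exp (-((2 * ε₀ * y) / 3)) := by
          rw [mul_assoc, ← Real.exp_add]
          simp
      _ ≤ (q^2 + 2 * (1 - q) * y) * Real.exp (-(4 * ε₀ / (3 * π ^ 2)) * t ^ 2) := by
          apply mul_le_mul hden2 hmono (Real.exp_pos _).le hden0.le
      _ = Real.exp (-(4 * ε₀ / (3 * π ^ 2)) * t ^ 2) * (q^2 + 2 * (1 - q) * y) := by ring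
  rw [← hnorm] at hkey
  exact (pow_le_pow_iff_left₀ (norm_nonneg _) (Real.exp_pos _).le (two_ne_zero)).mp hkey



variable {Ω : Type*} [MeasureSpace Ω] [IsProbabilityMeasure (ℙ : Measure Ω)]

lemma indep_mul {X Y : Ω → ℤ} (h : IndepFun X Y ℙ) (hX : Measurable X) (hY : Measurable Y)
    (f g : ℤ → ℂ) :
    ∫ ω, f (X ω) * g (Y ω) ∂ℙ = (∫ ω, f (X ω) ∂ℙ) * ∫ ω, g (Y ω) ∂ℙ := by
  have hf : Measurable f := measurable_from_top
  have hg : Measurable g := measurable_from_top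
  have hpair : Measurable (fun ω => (X ω, Y ω)) := hX.prodMk hY
  have hmapeq := (indepFun_iff_map_prod_eq_prod_map_map hX.aemeasurable hY.aemeasurable).mp h
  have hmeas2 : Measurable (fun z : ℤ × ℤ => f z.1 * g z.2) :=
    (hf.comp measurable_fst).mul (hg.comp measurable_snd)
  calc ∫ ω, f (X ω) * g (Y ω) ∂ℙ
      = ∫ z : ℤ × ℤ, f z.1 * g z.2 ∂(Measure.map (fun ω => (X ω, Y ω)) ℙ) :=
        (integral_map hpair.aemeasurable hmeas2.aestronglyMeasurable).symm
    _ = ∫ z : ℤ × ℤ, f z.1 * g z.2 ∂((Measure.map X ℙ).prod (Measure.map Y ℙ)) := by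
        rw [hmapeq]
    _ = (∫ z : ℤ, f z ∂(Measure.map X ℙ)) * ∫ z : ℤ, g z ∂(Measure.map Y ℙ) :=
        integral_prod_mul f g
    _ = (∫ ω, f (X ω) ∂ℙ) * ∫ ω, g (Y ω) ∂ℙ := by
        rw [integral_map hX.aemeasurable hf.aestronglyMeasurable,
          integral_map hY.aemeasurable hg.aestronglyMeasurable]

lemma char_prod (ℓ : ℕ → Ω → ℕ) (hmeas : ∀ j, Measurable (ℓ j))
    (hindep : iIndepFun ℓ ℙ) (t : ℝ) (n : ℕ) :
    ∫ ω, Complex.exp (t * (∑ i ∈ Finset.range n, (ℓ i ω : ℤ)) * Complex.I) ∂ℙ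
      = ∏ i ∈ Finset.range n, ∫ ω, Complex.exp (t * (ℓ i ω : ℕ) * Complex.I) ∂ℙ := by
  have hX : iIndepFun (fun i ω => (ℓ i ω : ℤ)) ℙ :=
    hindep.comp (fun _ m => (m : ℤ)) (fun _ => measurable_from_top)
  have hXm : ∀ i, Measurable (fun ω => (ℓ i ω : ℤ)) := fun i => measurable_from_top.comp (hmeas i)
  induction n with
  | zero => simp
  | succ n ih =>
      have hsum : Measurable (fun ω => ∑ i ∈ Finset.range n, (ℓ i ω : ℤ)) := by
        apply Finset.measurable_sum
        intro i _
        exact hXm i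
      have hind : IndepFun (fun ω => ∑ i ∈ Finset.range n, (ℓ i ω : ℤ))
          (fun ω => (ℓ n ω : ℤ)) ℙ := by
        have := hX.indepFun_finsetSum_of_notMem hXm (s := Finset.range n) (i := n)
          (by simp)
        have h2 : (∑ j ∈ Finset.range n, (fun ω => ((ℓ j ω : ℤ))))
            = fun ω => ∑ i ∈ Finset.range n, (ℓ i ω : ℤ) := by
          funext ω; simp
        rwa [h2] at this
      have step : ∫ ω, Complex.exp (t * (∑ i ∈ Finset.range (n+1), (ℓ i ω : ℤ)) * Complex.I) ∂ℙ
          = (∫ ω, Complex.exp (t * (∑ i ∈ Finset.range n, (ℓ i ω : ℤ)) * Complex.I) ∂ℙ)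
            * ∫ ω, Complex.exp (t * (ℓ n ω : ℤ) * Complex.I) ∂ℙ := by
        have := indep_mul hind hsum (hXm n)
          (fun z : ℤ => Complex.exp (t * z * Complex.I))
          (fun z : ℤ => Complex.exp (t * z * Complex.I))
        rw [← this]
        congr 1
        ext ω
        rw [Finset.sum_range_succ, ← Complex.exp_add]
        congr 1
        push_cast
        ring
      rw [step, ih, Finset.prod_range_succ]
      congr 1



variable {Ω : Type*} [MeasureSpace Ω] [IsProbabilityMeasure (ℙ : Measure Ω)]

lemma norm_exp_int' (t : ℝ) (m : ℤ) : ‖Complex.exp (t * m * Complex.I)‖ = 1 := by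
  have : (t : ℂ) * m = ((t * m : ℝ) : ℂ) := by push_cast; ring
  rw [this, Complex.norm_exp_ofReal_mul_I]

lemma norm_exp_int2 (t : ℝ) (m : ℤ) : ‖Complex.exp (-(t * Complex.I) * m)‖ = 1 := by
  have : -((t:ℂ) * Complex.I) * m = ((-(t * m) : ℝ) : ℂ) * Complex.I := by push_cast; ring
  rw [this, Complex.norm_exp_ofReal_mul_I]

lemma measurable_exp_int (j : ℤ) :
    Measurable (fun p : ℝ × Ω => Complex.exp (-(p.1 * Complex.I) * j)) := by
  apply Complex.measurable_exp.comp
  exact (((Complex.measurable_ofReal.comp measurable_fst).mul measurable_const).neg).mul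
    measurable_const

lemma inversion {Z : Ω → ℤ} (hZ : Measurable Z) (j : ℤ) :
    (ℙ {ω | Z ω = j}).toReal
      = (1 / (2 * π)) * (∫ t in (-π)..π,
          (∫ ω, Complex.exp (t * Z ω * Complex.I) ∂ℙ)
            * Complex.exp (-(t * Complex.I) * j)).re := by
  have hπ : (0:ℝ) < π := Real.pi_pos
  have hle : (-π : ℝ) ≤ π := by linarith
  set H : ℝ → Ω → ℂ := fun t ω =>
    Complex.exp (t * Z ω * Complex.I) * Complex.exp (-(t * Complex.I) * j) with hHdef
  have hZC : Measurable (fun ω => ((Z ω : ℤ) : ℂ)) :=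
    (measurable_from_top (f := fun z : ℤ => (z : ℂ))).comp hZ
  have hHm : Measurable (Function.uncurry H) := by
    apply Measurable.mul
    · apply Complex.measurable_exp.comp
      apply Measurable.mul _ measurable_const
      exact (Complex.measurable_ofReal.comp measurable_fst).mul (hZC.comp measurable_snd)
    · exact measurable_exp_int j
  have hHnorm : ∀ t ω, ‖H t ω‖ = 1 := by
    intro t ω
    rw [hHdef]
    simp only [norm_mul]
    rw [norm_exp_int' t (Z ω), norm_exp_int2 t j, mul_one]
  haveI hfin : IsFiniteMeasure (volume.restrict (Set.Ioc (-π) π)) :=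
    ⟨by rw [Measure.restrict_apply_univ]; exact measure_Ioc_lt_top⟩
  have hInt : Integrable (Function.uncurry H) ((volume.restrict (Set.Ioc (-π) π)).prod ℙ) := by
    apply Integrable.mono' (integrable_const 1) hHm.aestronglyMeasurable
    exact ae_of_all _ (fun p => le_of_eq (hHnorm p.1 p.2))
  -- pull the constant into the inner integral
  have e1 : ∀ t : ℝ, (∫ ω, Complex.exp (t * Z ω * Complex.I) ∂ℙ)
      * Complex.exp (-(t * Complex.I) * j) = ∫ ω, H t ω ∂ℙ := by
    intro t
    rw [hHdef]
    exact (integral_mul_const _ _).symm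
  have e2 : (∫ t in (-π)..π, (∫ ω, Complex.exp (t * Z ω * Complex.I) ∂ℙ)
      * Complex.exp (-(t * Complex.I) * j)) = ∫ t in Set.Ioc (-π) π, ∫ ω, H t ω ∂ℙ := by
    rw [intervalIntegral.integral_of_le hle]
    exact setIntegral_congr_fun measurableSet_Ioc (fun t _ => e1 t)
  have e3 : (∫ t in Set.Ioc (-π) π, ∫ ω, H t ω ∂ℙ)
      = ∫ ω, (∫ t in Set.Ioc (-π) π, H t ω) ∂ℙ := integral_integral_swap hInt
  -- compute the inner integral pointwise
  have e4 : ∀ ω, (∫ t in Set.Ioc (-π) π, H t ω)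
      = Set.indicator {ω' | Z ω' = j} (fun _ => ((2 * π : ℝ) : ℂ)) ω := by
    intro ω
    have hH2 : ∀ t : ℝ, H t ω = Complex.exp (((Z ω - j : ℤ) : ℂ) * Complex.I * t) := by
      intro t
      simp only [hHdef]
      rw [← Complex.exp_add]
      congr 1
      push_cast
      ring
    have hIoc : (∫ t in Set.Ioc (-π) π, H t ω) = ∫ t in (-π)..π, H t ω :=
      (intervalIntegral.integral_of_le hle).symm
    rw [hIoc]
    by_cases hcase : Z ω = j
    · have : ∀ t : ℝ, H t ω = 1 := by
        intro t
        rw [hH2 t, hcase]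
        simp
      rw [intervalIntegral.integral_congr (fun t _ => this t)]
      rw [intervalIntegral.integral_const]
      rw [Set.indicator_of_mem (by exact hcase), Complex.real_smul]
      push_cast
      ring
    · set K : ℤ := Z ω - j with hK
      have hKne : K ≠ 0 := sub_ne_zero.mpr hcase
      have hc : ((K : ℂ) * Complex.I) ≠ 0 :=
        mul_ne_zero (Int.cast_ne_zero.mpr hKne) Complex.I_ne_zero
      have : (∫ t in (-π)..π, H t ω)
          = ∫ t in (-π)..π, Complex.exp (((K : ℂ) * Complex.I) * t) :=
        intervalIntegral.integral_congr (fun t _ => hH2 t)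
      rw [this, integral_exp_mul_complex hc]
      have hper : Complex.exp ((K : ℂ) * Complex.I * (π : ℝ))
          = Complex.exp ((K : ℂ) * Complex.I * ((-π : ℝ) : ℝ)) := by
        have harg : (K : ℂ) * Complex.I * (π : ℝ)
            = (K : ℂ) * Complex.I * ((-π : ℝ) : ℝ) + (K : ℂ) * (2 * π * Complex.I) := by
          push_cast
          ring
        rw [harg, Complex.exp_add, Complex.exp_int_mul_two_pi_mul_I, mul_one]
      rw [hper]
      rw [Set.indicator_of_notMem (by exact hcase)]
      simp
  rw [e2, e3]
  have e5 : (∫ ω, (∫ t in Set.Ioc (-π) π, H t ω) ∂ℙ)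
      = (ℙ {ω' | Z ω' = j}).toReal • ((2 * π : ℝ) : ℂ) := by
    rw [integral_congr_ae (ae_of_all _ e4)]
    exact integral_indicator_const _ (hZ (measurableSet_singleton j))
  rw [e5]
  rw [Complex.real_smul]
  rw [← Complex.ofReal_mul]
  rw [Complex.ofReal_re]
  field_simp

lemma intervalIntegrable_of_bound {f : ℝ → ℂ} (hm : AEStronglyMeasurable f volume) (C : ℝ)
    (hb : ∀ t, ‖f t‖ ≤ C) : IntervalIntegrable f volume (-π) π := by
  rw [intervalIntegrable_iff]
  haveI : IsFiniteMeasure (volume.restrict (Set.uIoc (-π : ℝ) π)) :=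
    ⟨by rw [Measure.restrict_apply_univ, Set.uIoc]; exact measure_Ioc_lt_top⟩
  exact Integrable.mono' (integrable_const C) hm.restrict (ae_of_all _ hb)

lemma norm_integral_le_one {f : Ω → ℂ} (h : ∀ ω, ‖f ω‖ = 1) : ‖∫ ω, f ω ∂ℙ‖ ≤ 1 := by
  calc ‖∫ ω, f ω ∂ℙ‖ ≤ ∫ ω, ‖f ω‖ ∂ℙ := norm_integral_le_integral_norm _
    _ = ∫ _ω, (1:ℝ) ∂ℙ := integral_congr_ae (ae_of_all _ h)
    _ = 1 := by simp

lemma norm_exp_int'' (t : ℝ) (m : ℤ) : ‖Complex.exp (t * m * Complex.I)‖ = 1 := by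
  have : (t : ℂ) * m = ((t * m : ℝ) : ℂ) := by push_cast; ring
  rw [this, Complex.norm_exp_ofReal_mul_I]

lemma norm_exp_int2' (t : ℝ) (m : ℤ) : ‖Complex.exp (-(t * Complex.I) * m)‖ = 1 := by
  have : -((t:ℂ) * Complex.I) * m = ((-(t * m) : ℝ) : ℂ) * Complex.I := by push_cast; ring
  rw [this, Complex.norm_exp_ofReal_mul_I]

lemma norm_exp_neg (t : ℝ) : ‖Complex.exp (-(t * Complex.I))‖ = 1 := by
  have : -((t:ℂ) * Complex.I) = ((-t : ℝ) : ℂ) * Complex.I := by push_cast; ring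
  rw [this, Complex.norm_exp_ofReal_mul_I]

lemma meas_char {Z : Ω → ℤ} (hZ : Measurable Z) :
    StronglyMeasurable (fun t : ℝ => ∫ ω, Complex.exp (t * Z ω * Complex.I) ∂ℙ) := by
  have hZC : Measurable (fun ω => ((Z ω : ℤ) : ℂ)) :=
    (measurable_from_top (f := fun z : ℤ => (z : ℂ))).comp hZ
  have hm : StronglyMeasurable
      (fun p : ℝ × Ω => Complex.exp (p.1 * Z p.2 * Complex.I)) := by
    apply Measurable.stronglyMeasurable
    apply Complex.measurable_exp.comp
    apply Measurable.mul _ measurable_const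
    exact (Complex.measurable_ofReal.comp measurable_fst).mul (hZC.comp measurable_snd)
  exact hm.integral_prod_right'

lemma integrand_meas {Z : Ω → ℤ} (hZ : Measurable Z) (m : ℕ) (j : ℤ) :
    AEStronglyMeasurable (fun t : ℝ =>
      (∫ ω, Complex.exp (t * Z ω * Complex.I) ∂ℙ)
        * (Complex.exp (-(t * Complex.I)) - 1) ^ m
        * Complex.exp (-(t * Complex.I) * j)) volume := by
  apply AEStronglyMeasurable.mul
  apply AEStronglyMeasurable.mul
  · exact (meas_char hZ).aestronglyMeasurable
  · apply Measurable.aestronglyMeasurable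
    apply Measurable.pow _ measurable_const
    apply Measurable.sub _ measurable_const
    exact Complex.measurable_exp.comp ((Complex.measurable_ofReal.mul measurable_const).neg)
  · apply Measurable.aestronglyMeasurable
    apply Complex.measurable_exp.comp
    exact ((Complex.measurable_ofReal.mul measurable_const).neg).mul measurable_const

lemma integrand_bound {Z : Ω → ℤ} (m : ℕ) (j : ℤ) (t : ℝ) :
    ‖(∫ ω, Complex.exp (t * Z ω * Complex.I) ∂ℙ)
        * (Complex.exp (-(t * Complex.I)) - 1) ^ m
        * Complex.exp (-(t * Complex.I) * j)‖ ≤ 2 ^ m := by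
  rw [norm_mul, norm_mul, norm_exp_int2' t j, mul_one, norm_pow]
  have h1 : ‖∫ ω, Complex.exp (t * Z ω * Complex.I) ∂ℙ‖ ≤ 1 :=
    norm_integral_le_one (fun ω => norm_exp_int'' t (Z ω))
  have h2 : ‖Complex.exp (-(t * Complex.I)) - 1‖ ≤ 2 := by
    calc ‖Complex.exp (-(t * Complex.I)) - 1‖
        ≤ ‖Complex.exp (-(t * Complex.I))‖ + ‖(1:ℂ)‖ := norm_sub_le _ _
      _ = 2 := by rw [norm_exp_neg, norm_one]; norm_num
  calc ‖∫ ω, Complex.exp (t * Z ω * Complex.I) ∂ℙ‖ * ‖Complex.exp (-(t * Complex.I)) - 1‖ ^ m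
      ≤ 1 * 2 ^ m := by
        apply mul_le_mul h1 (pow_le_pow_left₀ (norm_nonneg _) h2 m) (by positivity) one_pos.le
    _ = 2 ^ m := one_mul _

lemma iterated {Z : Ω → ℤ} (hZ : Measurable Z) (m : ℕ) (j : ℤ) :
    nabla^[m] (fun k => (ℙ {ω | Z ω = k}).toReal) j
      = (1 / (2 * π)) * (∫ t in (-π)..π,
          (∫ ω, Complex.exp (t * Z ω * Complex.I) ∂ℙ)
            * (Complex.exp (-(t * Complex.I)) - 1) ^ m
            * Complex.exp (-(t * Complex.I) * j)).re := by
  induction m generalizing j with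
  | zero =>
      simp only [Function.iterate_zero, id_eq, pow_zero, mul_one]
      exact inversion hZ j
  | succ m ih =>
      rw [Function.iterate_succ_apply']
      have hL : nabla (nabla^[m] fun k => (ℙ {ω | Z ω = k}).toReal) j
          = nabla^[m] (fun k => (ℙ {ω | Z ω = k}).toReal) (j+1)
            - nabla^[m] (fun k => (ℙ {ω | Z ω = k}).toReal) j := rfl
      rw [hL, ih (j+1), ih j]
      have hii : ∀ j' : ℤ, IntervalIntegrable (fun t : ℝ =>
          (∫ ω, Complex.exp (t * Z ω * Complex.I) ∂ℙ)
            * (Complex.exp (-(t * Complex.I)) - 1) ^ m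
            * Complex.exp (-(t * Complex.I) * j')) volume (-π) π :=
        fun j' => intervalIntegrable_of_bound (integrand_meas hZ m j') (2^m)
          (integrand_bound m j')
      rw [← mul_sub, ← Complex.sub_re, ← intervalIntegral.integral_sub (hii (j+1)) (hii j)]
      congr 2
      apply intervalIntegral.integral_congr
      intro t _
      simp only
      have he : Complex.exp (-(t * Complex.I) * (j+1 : ℤ))
          = Complex.exp (-(t * Complex.I) * j) * Complex.exp (-(t * Complex.I)) := by
        rw [← Complex.exp_add]
        congr 1
        push_cast
        ring
      rw [he, pow_succ]
      ring



lemma norm_exp_I_sub_one_le (s : ℝ) : ‖Complex.exp ((s:ℂ) * Complex.I) - 1‖ ≤ |s| := by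
  have hre : (Complex.exp ((s:ℂ) * Complex.I) - 1).re = Real.cos s - 1 := by
    simp [Complex.exp_ofReal_mul_I_re]
  have him : (Complex.exp ((s:ℂ) * Complex.I) - 1).im = Real.sin s := by
    simp [Complex.exp_ofReal_mul_I_im]
  have hns : Complex.normSq (Complex.exp ((s:ℂ) * Complex.I) - 1) = 2 - 2 * Real.cos s := by
    rw [Complex.normSq_apply, hre, him]
    nlinarith [Real.sin_sq_add_cos_sq s]
  have hb : 2 - 2 * Real.cos s ≤ s^2 := by
    nlinarith [Real.one_sub_sq_div_two_le_cos (x := s)]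
  rw [Complex.norm_def, hns]
  calc Real.sqrt (2 - 2 * Real.cos s) ≤ Real.sqrt (s^2) := Real.sqrt_le_sqrt hb
    _ = |s| := Real.sqrt_sq_eq_abs s

lemma integrable_abs_pow_gauss {b : ℝ} (hb : 0 < b) (m : ℕ) :
    Integrable (fun t : ℝ => |t| ^ m * Real.exp (-b * t^2)) := by
  have hs : (-1 : ℝ) < m := lt_of_lt_of_le neg_one_lt_zero (Nat.cast_nonneg m)
  have h1 : IntegrableOn (fun t : ℝ => |t| ^ m * Real.exp (-b * t^2)) (Ioi 0) := by
    refine (integrableOn_rpow_mul_exp_neg_mul_sq hb hs).congr_fun (fun x hx => ?_)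
      measurableSet_Ioi
    dsimp only; rw [show ((m:ℝ)) = ((m:ℕ):ℝ) from rfl, Real.rpow_natCast, abs_of_pos hx]
  rw [← integrableOn_univ, ← Iio_union_Ici (a := (0:ℝ)), integrableOn_union]
  constructor
  · rw [← (Measure.measurePreserving_neg (volume : Measure ℝ)).integrableOn_comp_preimage
        (Homeomorph.neg ℝ).measurableEmbedding]
    simp only [Function.comp_def, neg_sq, neg_preimage, neg_Iio, neg_neg, neg_zero, abs_neg]
    exact h1
  · rw [integrableOn_Ici_iff_integrableOn_Ioi]
    exact h1

lemma gauss_est {c : ℝ} (hc : 0 < c) (m : ℕ) : ∃ C : ℝ, ∀ n : ℕ, 1 ≤ n →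
    (∫ t in Ioc (-π) π, |t| ^ m * Real.exp (-(c * n) * t^2))
      ≤ C * (n:ℝ) ^ (-((m:ℝ) + 1)/2) := by
  refine ⟨∫ t : ℝ, |t| ^ m * Real.exp (-c * t^2), fun n hn => ?_⟩
  have hn0 : (0:ℝ) < n := by exact_mod_cast hn
  have hbn : (0:ℝ) < c * n := by positivity
  have hInt : Integrable (fun t : ℝ => |t| ^ m * Real.exp (-(c * n) * t^2)) :=
    integrable_abs_pow_gauss hbn m
  have step1 : (∫ t in Ioc (-π) π, |t| ^ m * Real.exp (-(c * n) * t^2))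
      ≤ ∫ t : ℝ, |t| ^ m * Real.exp (-(c * n) * t^2) := by
    apply setIntegral_le_integral hInt
    apply ae_of_all
    intro t
    positivity
  refine step1.trans (le_of_eq ?_)
  set r : ℝ := (n:ℝ) ^ ((1:ℝ)/2) with hr
  have hr0 : 0 < r := Real.rpow_pos_of_pos hn0 _
  have hr2 : r^2 = (n:ℝ) := by
    rw [hr, ← Real.rpow_natCast ((n:ℝ) ^ ((1:ℝ)/2)) 2, ← Real.rpow_mul hn0.le]
    norm_num
  have hcomp : ∀ t : ℝ, |r * t| ^ m * Real.exp (-c * (r * t)^2)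
      = r ^ m * (|t| ^ m * Real.exp (-(c * n) * t^2)) := by
    intro t
    rw [abs_mul, abs_of_pos hr0, mul_pow]
    rw [mul_pow, hr2]
    ring_nf
  have hcv := MeasureTheory.Measure.integral_comp_mul_left
    (fun s : ℝ => |s| ^ m * Real.exp (-c * s^2)) r
  simp only [hcomp] at hcv
  rw [integral_const_mul] at hcv
  -- hcv : r^m * ∫ t, |t|^m exp(-(c n) t²) = |r⁻¹| • ∫ s, |s|^m exp(-c s²)
  have habs : |r⁻¹| = r⁻¹ := abs_of_pos (by positivity)
  rw [habs, smul_eq_mul] at hcv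
  have hrm : (0:ℝ) < r ^ m := by positivity
  have : (∫ t : ℝ, |t| ^ m * Real.exp (-(c * n) * t^2))
      = (r ^ m)⁻¹ * r⁻¹ * ∫ s : ℝ, |s| ^ m * Real.exp (-c * s^2) := by
    field_simp at hcv ⊢
    linarith [hcv]
  rw [this]
  have hpow : (r ^ m)⁻¹ * r⁻¹ = (n:ℝ) ^ (-((m:ℝ) + 1)/2) := by
    rw [hr, ← Real.rpow_natCast ((n:ℝ) ^ ((1:ℝ)/2)) m, ← Real.rpow_mul hn0.le,
      ← Real.rpow_neg_one ((n:ℝ) ^ ((1:ℝ)/2)), ← Real.rpow_mul hn0.le,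
      ← Real.rpow_neg hn0.le, ← Real.rpow_add hn0]
    congr 1
    ring
  rw [hpow]
  ring


end LLT

/-- For sums `S_n` of independent geometric random variables with parameters uniformly
inside `(0,1)`, the `m`-th discrete difference of the distribution `j ↦ P(S_n = j)`
is `O(n^{-(m+1)/2})` uniformly in `j`. -/
theorem iterated_difference_decay {Ω : Type*} [MeasureSpace Ω]
    [IsProbabilityMeasure (ℙ : Measure Ω)]
    (ε₀ : ℝ) (hε₀ : 0 < ε₀) (p : ℕ → ℝ) (hp : ∀ j, ε₀ < p j ∧ p j < 1 - ε₀)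
    (ℓ : ℕ → Ω → ℕ) (hmeas : ∀ j, Measurable (ℓ j))
    (hindep : iIndepFun ℓ ℙ)
    (hval : ∀ j ω, 1 ≤ ℓ j ω)
    (hgeom : ∀ j m, 1 ≤ m →
      (ℙ {ω | ℓ j ω = m}).toReal = p j * (1 - p j) ^ (m - 1)) :
    ∀ m : ℕ, ∃ C : ℝ, ∀ n : ℕ, 1 ≤ n → ∀ j : ℤ,
      |nabla^[m]
          (fun k : ℤ => (ℙ {ω | (∑ i ∈ Finset.range n, (ℓ i ω : ℤ)) = k}).toReal) j|
        ≤ C * (n : ℝ) ^ (-((m : ℝ) + 1) / 2) := by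
  intro m
  have hπ : (0:ℝ) < π := Real.pi_pos
  have hle : (-π : ℝ) ≤ π := by linarith
  have hc : (0:ℝ) < 2 * ε₀ / (3 * π ^ 2) := by positivity
  set c : ℝ := 2 * ε₀ / (3 * π ^ 2) with hcdef
  obtain ⟨C₀, hC₀⟩ := LLT.gauss_est hc m
  refine ⟨(1 / (2 * π)) * C₀, fun n hn j => ?_⟩
  have hn0 : (0:ℝ) < n := by exact_mod_cast hn
  have hbn : (0:ℝ) < c * n := by positivity
  have hS : Measurable (fun ω => ∑ i ∈ Finset.range n, (ℓ i ω : ℤ)) := by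
    apply Finset.measurable_sum
    intro i _
    exact (measurable_from_top (f := fun k : ℕ => (k:ℤ))).comp (hmeas i)
  have h0 : nabla^[m] (fun k : ℤ =>
        (ℙ {ω | (∑ i ∈ Finset.range n, (ℓ i ω : ℤ)) = k}).toReal) j
      = (1 / (2 * π)) * (∫ t in (-π)..π,
          (∫ ω, Complex.exp (t * (∑ i ∈ Finset.range n, (ℓ i ω : ℤ)) * Complex.I) ∂ℙ)
            * (Complex.exp (-(t * Complex.I)) - 1) ^ m
            * Complex.exp (-(t * Complex.I) * j)).re := LLT.iterated hS m j
  rw [h0]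
  set f : ℝ → ℂ := fun t =>
    (∫ ω, Complex.exp (t * (∑ i ∈ Finset.range n, (ℓ i ω : ℤ)) * Complex.I) ∂ℙ)
      * (Complex.exp (-(t * Complex.I)) - 1) ^ m
      * Complex.exp (-(t * Complex.I) * j) with hfdef
  have hpt : ∀ t ∈ Set.Ioc (-π) π, ‖f t‖ ≤ |t| ^ m * Real.exp (-(c * n) * t ^ 2) := by
    intro t ht
    have htabs : |t| ≤ π := abs_le.mpr ⟨ht.1.le, ht.2⟩
    have hE : ‖∫ ω, Complex.exp (t * (∑ i ∈ Finset.range n, (ℓ i ω : ℤ)) * Complex.I) ∂ℙ‖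
        ≤ Real.exp (-(c * n) * t ^ 2) := by
      rw [LLT.char_prod ℓ hmeas hindep t n]
      calc ‖∏ i ∈ Finset.range n, ∫ ω, Complex.exp (t * (ℓ i ω : ℕ) * Complex.I) ∂ℙ‖
          = ∏ i ∈ Finset.range n, ‖∫ ω, Complex.exp (t * (ℓ i ω : ℕ) * Complex.I) ∂ℙ‖ :=
            norm_prod _ _
        _ ≤ ∏ _i ∈ Finset.range n, Real.exp (-c * t ^ 2) := by
            apply Finset.prod_le_prod (fun i _ => norm_nonneg _)
            intro i _
            have hq0 : 0 < p i := hε₀.trans (hp i).1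
            have hq1 : p i < 1 := by linarith [(hp i).2]
            rw [LLT.geom_char (hmeas i) hq0 hq1 (hval i) (hgeom i) t]
            have := LLT.geom_char_norm_le hε₀ (hp i).1 (hp i).2 htabs
            calc ‖(p i : ℂ) * Complex.exp (t * Complex.I)
                  * (1 - (1 - p i) * Complex.exp (t * Complex.I))⁻¹‖
                ≤ Real.exp (-(2 * ε₀ / (3 * π ^ 2)) * t ^ 2) := this
              _ = Real.exp (-c * t ^ 2) := by rw [hcdef]
        _ = Real.exp (-c * t ^ 2) ^ n := by rw [Finset.prod_const, Finset.card_range]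
        _ = Real.exp (-(c * n) * t ^ 2) := by
            rw [← Real.exp_nat_mul]
            congr 1
            ring
    have hD : ‖Complex.exp (-(t * Complex.I)) - 1‖ ≤ |t| := by
      have harg : -((t:ℂ) * Complex.I) = ((-t : ℝ) : ℂ) * Complex.I := by push_cast; ring
      rw [harg]
      calc ‖Complex.exp (((-t : ℝ) : ℂ) * Complex.I) - 1‖ ≤ |(-t)| :=
            LLT.norm_exp_I_sub_one_le (-t)
        _ = |t| := abs_neg t
    rw [hfdef]
    simp only
    rw [norm_mul, norm_mul, LLT.norm_exp_int2' t j, mul_one, norm_pow]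
    calc ‖∫ ω, Complex.exp (t * (∑ i ∈ Finset.range n, (ℓ i ω : ℤ)) * Complex.I) ∂ℙ‖
          * ‖Complex.exp (-(t * Complex.I)) - 1‖ ^ m
        ≤ Real.exp (-(c * n) * t ^ 2) * |t| ^ m := by
          apply mul_le_mul hE (pow_le_pow_left₀ (norm_nonneg _) hD m) (by positivity)
            (Real.exp_pos _).le
      _ = |t| ^ m * Real.exp (-(c * n) * t ^ 2) := mul_comm _ _
  have hII : IntervalIntegrable f volume (-π) π :=
    LLT.intervalIntegrable_of_bound (LLT.integrand_meas hS m j) (2 ^ m)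
      (LLT.integrand_bound m j)
  have hIOn : IntegrableOn (fun t => ‖f t‖) (Set.Ioc (-π) π) volume := by
    have := hII.norm
    rw [intervalIntegrable_iff, Set.uIoc_of_le hle] at this
    exact this
  have hIOn2 : IntegrableOn (fun t : ℝ => |t| ^ m * Real.exp (-(c * n) * t ^ 2))
      (Set.Ioc (-π) π) volume := (LLT.integrable_abs_pow_gauss hbn m).integrableOn
  calc |(1 / (2 * π)) * (∫ t in (-π)..π, f t).re|
      = (1 / (2 * π)) * |(∫ t in (-π)..π, f t).re| := by
        rw [abs_mul, abs_of_pos (by positivity)]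
    _ ≤ (1 / (2 * π)) * ‖∫ t in (-π)..π, f t‖ := by
        apply mul_le_mul_of_nonneg_left _ (by positivity)
        exact Complex.abs_re_le_norm _
    _ ≤ (1 / (2 * π)) * ∫ t in (-π)..π, ‖f t‖ := by
        apply mul_le_mul_of_nonneg_left
          (intervalIntegral.norm_integral_le_integral_norm hle) (by positivity)
    _ = (1 / (2 * π)) * ∫ t in Set.Ioc (-π) π, ‖f t‖ := by
        rw [intervalIntegral.integral_of_le hle]
    _ ≤ (1 / (2 * π)) * ∫ t in Set.Ioc (-π) π, |t| ^ m * Real.exp (-(c * n) * t ^ 2) := by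
        apply mul_le_mul_of_nonneg_left _ (by positivity)
        exact setIntegral_mono_on hIOn hIOn2 measurableSet_Ioc hpt
    _ ≤ (1 / (2 * π)) * (C₀ * (n : ℝ) ^ (-((m : ℝ) + 1) / 2)) := by
        apply mul_le_mul_of_nonneg_left (hC₀ n hn) (by positivity)
    _ = (1 / (2 * π)) * C₀ * (n : ℝ) ^ (-((m : ℝ) + 1) / 2) := by ring
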